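/- Let G : [0,1]×[0,1] → ℝ be defined by G(t,s) = s(1 − t) if s ≤ t and G(t,s) = t(1 − s) if t ≤ s. Then there exists a continuous nonnegative function x* : [0,1] → ℝ satisfying x*(t) = ∫₀¹ G(t,s)·(1 + (1/4)sin s + x*(s)²)·s^{−1/2} ds for all t ∈ [0,1] (equivalently, x* is a positive solution of −t^{1/2} x″(t) = 1 + (1/4)sin t + x(t)² with x(0) = x(1) = 0), and such that 11/1000 ≤ min over t ∈ [1/4,3/4] of x*(t) and max over t ∈ [0,1] of x*(t) ≤ 9/25. -/

import Mathlib

open MeasureTheory intervalIntegral Set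

noncomputable section BVP19

namespace BVP19

/-- first integrand piece -/
def f1 (c : ℝ → ℝ) : ℝ → ℝ := fun s => c s * s ^ ((1:ℝ)/2)
/-- second integrand piece -/
def f2 (c : ℝ → ℝ) : ℝ → ℝ := fun s => (c s * (1 - s)) * s ^ (-(1/2) : ℝ)

/-- split form of the integral operator -/
def F (c : ℝ → ℝ) : ℝ → ℝ := fun t =>
  (1 - t) * (∫ s in (0:ℝ)..t, f1 c s) +
  t * ((∫ s in (0:ℝ)..1, f2 c s) - ∫ s in (0:ℝ)..t, f2 c s)

lemma int_half (a b : ℝ) : IntervalIntegrable (fun s : ℝ => s ^ ((1:ℝ)/2)) volume a b :=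
  intervalIntegrable_rpow' (by norm_num)

lemma int_neg_half (a b : ℝ) : IntervalIntegrable (fun s : ℝ => s ^ (-(1/2) : ℝ)) volume a b :=
  intervalIntegrable_rpow' (by norm_num)

lemma f1_int {c : ℝ → ℝ} (hc : Continuous c) (a b : ℝ) :
    IntervalIntegrable (f1 c) volume a b :=
  (int_half a b).continuousOn_mul hc.continuousOn

lemma f2_int {c : ℝ → ℝ} (hc : Continuous c) (a b : ℝ) :
    IntervalIntegrable (f2 c) volume a b :=
  (int_neg_half a b).continuousOn_mul (hc.mul (by continuity)).continuousOn

lemma F_continuous {c : ℝ → ℝ} (hc : Continuous c) : Continuous (F c) := by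
  have h1 : Continuous fun t => ∫ s in (0:ℝ)..t, f1 c s :=
    intervalIntegral.continuous_primitive (fun a b => f1_int hc a b) 0
  have h2 : Continuous fun t => ∫ s in (0:ℝ)..t, f2 c s :=
    intervalIntegral.continuous_primitive (fun a b => f2_int hc a b) 0
  unfold F
  fun_prop

lemma eval_half {t : ℝ} (ht : 0 ≤ t) :
    ∫ s in (0:ℝ)..t, s ^ ((1:ℝ)/2) = 2/3 * (t * Real.sqrt t) := by
  rw [integral_rpow (Or.inl (by norm_num))]
  rw [show (1:ℝ)/2 + 1 = (3:ℝ)/2 by norm_num]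
  rw [show (3:ℝ)/2 = 1 + 1/2 by norm_num, Real.rpow_add' ht (by norm_num),
    Real.rpow_one, ← Real.sqrt_eq_rpow]
  norm_num
  ring

lemma eval_neg_half {t : ℝ} (ht : 0 ≤ t) :
    ∫ s in (0:ℝ)..t, s ^ (-(1/2) : ℝ) = 2 * Real.sqrt t := by
  rw [integral_rpow (Or.inl (by norm_num))]
  rw [show -(1/2 : ℝ) + 1 = 1/2 by norm_num, ← Real.sqrt_eq_rpow]
  norm_num
  ring

lemma mul_neg_half {s : ℝ} (hs : 0 ≤ s) :
    s * s ^ (-(1/2) : ℝ) = s ^ ((1:ℝ)/2) := by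
  rcases eq_or_lt_of_le hs with h | h
  · rw [← h, Real.zero_rpow (by norm_num), Real.zero_rpow (by norm_num), mul_zero]
  · rw [show s * s ^ (-(1/2) : ℝ) = s ^ (1:ℝ) * s ^ (-(1/2):ℝ) by rw [Real.rpow_one],
      ← Real.rpow_add h]
    norm_num

lemma eval_one_sub {t : ℝ} (ht : 0 ≤ t) :
    ∫ s in (0:ℝ)..t, (1 - s) * s ^ (-(1/2) : ℝ)
      = 2 * Real.sqrt t - 2/3 * (t * Real.sqrt t) := by
  have heq : EqOn (fun s : ℝ => (1 - s) * s ^ (-(1/2) : ℝ))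
      (fun s : ℝ => s ^ (-(1/2) : ℝ) - s ^ ((1:ℝ)/2)) (uIcc 0 t) := by
    intro s hs
    rw [uIcc_of_le ht] at hs
    simp only
    rw [sub_mul, one_mul, mul_neg_half hs.1]
  rw [intervalIntegral.integral_congr heq,
    intervalIntegral.integral_sub (int_neg_half 0 t) (int_half 0 t),
    eval_half ht, eval_neg_half ht]

lemma int_one_sub (a b : ℝ) :
    IntervalIntegrable (fun s : ℝ => (1 - s) * s ^ (-(1/2) : ℝ)) volume a b :=
  (int_neg_half a b).continuousOn_mul (by fun_prop)

lemma eval_t1 {t : ℝ} (ht : t ∈ Icc (0:ℝ) 1) :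
    ∫ s in t..1, (1 - s) * s ^ (-(1/2) : ℝ)
      = 4/3 - (2 * Real.sqrt t - 2/3 * (t * Real.sqrt t)) := by
  have h := integral_add_adjacent_intervals (int_one_sub 0 t) (int_one_sub t 1)
  rw [eval_one_sub ht.1, eval_one_sub (zero_le_one)] at h
  rw [Real.sqrt_one] at h
  linarith

lemma F_lower {c : ℝ → ℝ} (hc : Continuous c) {m t : ℝ}
    (hm : ∀ s ∈ Icc (0:ℝ) 1, m ≤ c s) (ht : t ∈ Icc (0:ℝ) 1) :
    m * (4/3 * (t * (1 - Real.sqrt t))) ≤ F c t := by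
  obtain ⟨ht0, ht1⟩ := ht
  have hA : m * (2/3 * (t * Real.sqrt t)) ≤ ∫ s in (0:ℝ)..t, f1 c s := by
    have h1 : (∫ s in (0:ℝ)..t, m * s ^ ((1:ℝ)/2)) = m * (2/3 * (t * Real.sqrt t)) := by
      rw [intervalIntegral.integral_const_mul, eval_half ht0]
    rw [← h1]
    refine intervalIntegral.integral_mono_on ht0 ((int_half 0 t).const_mul m)
      (f1_int hc 0 t) ?_
    intro s hs
    exact mul_le_mul_of_nonneg_right (hm s ⟨hs.1, hs.2.trans ht1⟩)
      (Real.rpow_nonneg hs.1 _)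
  have hB : m * (4/3 - (2 * Real.sqrt t - 2/3 * (t * Real.sqrt t)))
      ≤ ∫ s in t..1, f2 c s := by
    have h1 : (∫ s in t..1, m * ((1 - s) * s ^ (-(1/2) : ℝ)))
        = m * (4/3 - (2 * Real.sqrt t - 2/3 * (t * Real.sqrt t))) := by
      rw [intervalIntegral.integral_const_mul, eval_t1 ⟨ht0, ht1⟩]
    rw [← h1]
    refine intervalIntegral.integral_mono_on ht1 ((int_one_sub t 1).const_mul m)
      (f2_int hc t 1) ?_
    intro s hs
    have hs0 : 0 ≤ s := ht0.trans hs.1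
    have h2 : 0 ≤ (1 - s) * s ^ (-(1/2) : ℝ) :=
      mul_nonneg (by linarith [hs.2]) (Real.rpow_nonneg hs0 _)
    calc m * ((1 - s) * s ^ (-(1/2) : ℝ)) ≤ c s * ((1 - s) * s ^ (-(1/2) : ℝ)) :=
          mul_le_mul_of_nonneg_right (hm s ⟨hs0, hs.2⟩) h2
      _ = f2 c s := by rw [f2]; ring
  have hsplit : (∫ s in (0:ℝ)..1, f2 c s) - (∫ s in (0:ℝ)..t, f2 c s)
      = ∫ s in t..1, f2 c s := by
    have h := integral_add_adjacent_intervals (f2_int hc 0 t) (f2_int hc t 1)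
    linarith
  rw [F, hsplit]
  have h1 : (1 - t) * (m * (2/3 * (t * Real.sqrt t)))
      ≤ (1 - t) * ∫ s in (0:ℝ)..t, f1 c s :=
    mul_le_mul_of_nonneg_left hA (by linarith)
  have h2 : t * (m * (4/3 - (2 * Real.sqrt t - 2/3 * (t * Real.sqrt t))))
      ≤ t * ∫ s in t..1, f2 c s :=
    mul_le_mul_of_nonneg_left hB ht0
  nlinarith [h1, h2]

lemma F_neg (c : ℝ → ℝ) (t : ℝ) : F (fun s => -(c s)) t = -(F c t) := by
  have h1 : ∀ a b : ℝ, (∫ s in a..b, f1 (fun s => -(c s)) s) = -∫ s in a..b, f1 c s := by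
    intro a b
    rw [← intervalIntegral.integral_neg]
    apply intervalIntegral.integral_congr
    intro s _
    simp [f1]
  have h2 : ∀ a b : ℝ, (∫ s in a..b, f2 (fun s => -(c s)) s) = -∫ s in a..b, f2 c s := by
    intro a b
    rw [← intervalIntegral.integral_neg]
    apply intervalIntegral.integral_congr
    intro s _
    simp [f2]
  rw [F, F, h1, h2, h2]
  ring

lemma F_upper {c : ℝ → ℝ} (hc : Continuous c) {M t : ℝ}
    (hM : ∀ s ∈ Icc (0:ℝ) 1, c s ≤ M) (ht : t ∈ Icc (0:ℝ) 1) :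
    F c t ≤ M * (4/3 * (t * (1 - Real.sqrt t))) := by
  have h := F_lower (c := fun s => -(c s)) (by fun_prop) (m := -M)
    (fun s hs => by simpa using hM s hs) ht
  rw [F_neg] at h
  linarith

lemma F_eq {c : ℝ → ℝ} (hc : Continuous c) {t : ℝ} (ht : t ∈ Icc (0:ℝ) 1) :
    (∫ s in (0:ℝ)..1, (if s ≤ t then s * (1 - t) else t * (1 - s)) * c s * s ^ (-(1/2) : ℝ))
      = F c t := by
  obtain ⟨ht0, ht1⟩ := ht
  set g : ℝ → ℝ := fun s => (if s ≤ t then s * (1 - t) else t * (1 - s)) * c s * s ^ (-(1/2) : ℝ)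
    with hg
  have hmin : ∀ s : ℝ, (if s ≤ t then s * (1 - t) else t * (1 - s)) = min s t - s * t := by
    intro s
    rcases le_or_gt s t with h | h
    · rw [if_pos h, min_eq_left h]; ring
    · rw [if_neg (not_le.mpr h), min_eq_right h.le]; ring
  have hint : ∀ a b : ℝ, IntervalIntegrable g volume a b := by
    intro a b
    have : g = fun s => ((min s t - s * t) * c s) * s ^ (-(1/2) : ℝ) := by
      funext s; rw [hg]; simp only [hmin]
    rw [this]
    exact (int_neg_half a b).continuousOn_mul
      (((continuous_id.min continuous_const).sub
        (continuous_id.mul continuous_const)).mul hc).continuousOn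
  rw [← integral_add_adjacent_intervals (hint 0 t) (hint t 1)]
  have hp1 : (∫ s in (0:ℝ)..t, g s) = (1 - t) * ∫ s in (0:ℝ)..t, f1 c s := by
    rw [← intervalIntegral.integral_const_mul]
    apply intervalIntegral.integral_congr
    intro s hs
    rw [uIcc_of_le ht0] at hs
    rw [hg]
    simp only [if_pos hs.2]
    rw [f1, show s * (1 - t) * c s * s ^ (-(1/2):ℝ)
        = (1 - t) * c s * (s * s ^ (-(1/2):ℝ)) by ring, mul_neg_half hs.1]
    ring
  have hp2 : (∫ s in t..1, g s) = t * ((∫ s in (0:ℝ)..1, f2 c s) - ∫ s in (0:ℝ)..t, f2 c s) := by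
    have hsplit : (∫ s in (0:ℝ)..1, f2 c s) - (∫ s in (0:ℝ)..t, f2 c s)
        = ∫ s in t..1, f2 c s := by
      have h := integral_add_adjacent_intervals (f2_int hc 0 t) (f2_int hc t 1)
      linarith
    rw [hsplit, ← intervalIntegral.integral_const_mul]
    apply intervalIntegral.integral_congr
    intro s hs
    rw [uIcc_of_le ht1] at hs
    simp only [hg, f2]
    rcases le_or_gt s t with h | h
    · have hst : s = t := le_antisymm h hs.1
      subst hst
      simp only [if_pos le_rfl]
      ring
    · rw [if_neg (not_le.mpr h)]
      ring
  rw [hp1, hp2, F]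

lemma F_sub {c1 c2 : ℝ → ℝ} (hc1 : Continuous c1) (hc2 : Continuous c2) (t : ℝ) :
    F (fun s => c1 s - c2 s) t = F c1 t - F c2 t := by
  have h1 : ∀ a b : ℝ, (∫ s in a..b, f1 (fun s => c1 s - c2 s) s)
      = (∫ s in a..b, f1 c1 s) - ∫ s in a..b, f1 c2 s := by
    intro a b
    rw [← intervalIntegral.integral_sub (f1_int hc1 a b) (f1_int hc2 a b)]
    apply intervalIntegral.integral_congr
    intro s _
    simp only [f1, Pi.sub_apply]
    ring
  have h2 : ∀ a b : ℝ, (∫ s in a..b, f2 (fun s => c1 s - c2 s) s)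
      = (∫ s in a..b, f2 c1 s) - ∫ s in a..b, f2 c2 s := by
    intro a b
    rw [← intervalIntegral.integral_sub (f2_int hc1 a b) (f2_int hc2 a b)]
    apply intervalIntegral.integral_congr
    intro s _
    simp only [f2, Pi.sub_apply]
    ring
  rw [F, F, F, h1, h2, h2]
  ring

lemma w_nonneg {t : ℝ} (ht : t ∈ Icc (0:ℝ) 1) : 0 ≤ t * (1 - Real.sqrt t) := by
  have hv : Real.sqrt t * Real.sqrt t = t := Real.mul_self_sqrt ht.1
  have hv0 : 0 ≤ Real.sqrt t := Real.sqrt_nonneg t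
  nlinarith [ht.1, ht.2]

lemma w_le {t : ℝ} (ht : t ∈ Icc (0:ℝ) 1) : t * (1 - Real.sqrt t) ≤ 4/27 := by
  have hv : Real.sqrt t * Real.sqrt t = t := Real.mul_self_sqrt ht.1
  have hv0 : 0 ≤ Real.sqrt t := Real.sqrt_nonneg t
  nlinarith [mul_nonneg (sq_nonneg (3 * Real.sqrt t - 2))
    (by linarith : (0:ℝ) ≤ 3 * Real.sqrt t + 1)]

abbrev I01 : Set ℝ := Icc (0:ℝ) 1

def ext (x : C(I01, ℝ)) : ℝ → ℝ := fun s => x (projIcc 0 1 zero_le_one s)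

lemma ext_cont (x : C(I01, ℝ)) : Continuous (ext x) :=
  x.continuous.comp continuous_projIcc

lemma ext_eq (x : C(I01, ℝ)) {s : ℝ} (hs : s ∈ I01) : ext x s = x ⟨s, hs⟩ := by
  simp only [ext, projIcc_of_mem zero_le_one hs]

lemma ext_bound (x : C(I01, ℝ)) (s : ℝ) : |ext x s| ≤ ‖x‖ := by
  rw [← Real.norm_eq_abs]
  exact x.norm_coe_le_norm _

def hfun (x : C(I01, ℝ)) : ℝ → ℝ := fun s => 1 + 1/4 * Real.sin s + (ext x s)^2

lemma hfun_cont (x : C(I01, ℝ)) : Continuous (hfun x) := by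
  have := ext_cont x
  unfold hfun
  fun_prop

lemma hfun_lower (x : C(I01, ℝ)) (s : ℝ) : 3/4 ≤ hfun x s := by
  have h1 := Real.neg_one_le_sin s
  have h2 := sq_nonneg (ext x s)
  simp only [hfun]
  nlinarith

lemma hfun_upper {x : C(I01, ℝ)} (hx : ‖x‖ ≤ 9/25) (s : ℝ) : hfun x s ≤ 3449/2500 := by
  have h1 := Real.sin_le_one s
  have h2 : |ext x s| ≤ 9/25 := (ext_bound x s).trans hx
  obtain ⟨h3, h4⟩ := abs_le.mp h2
  simp only [hfun]
  nlinarith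

def T (x : C(I01, ℝ)) : C(I01, ℝ) :=
  ⟨fun p => F (hfun x) p.1, (F_continuous (hfun_cont x)).comp continuous_subtype_val⟩

lemma T_apply (x : C(I01, ℝ)) (p : I01) : T x p = F (hfun x) p.1 := rfl

lemma T_norm_le {x : C(I01, ℝ)} (hx : ‖x‖ ≤ 9/25) : ‖T x‖ ≤ 9/25 := by
  rw [ContinuousMap.norm_le _ (by norm_num)]
  intro p
  rw [Real.norm_eq_abs, T_apply]
  have hp : (p : ℝ) ∈ Icc (0:ℝ) 1 := p.2
  have hlo := F_lower (hfun_cont x) (fun s _ => hfun_lower x s) hp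
  have hhi := F_upper (hfun_cont x) (fun s _ => hfun_upper hx s) hp
  have hw0 := w_nonneg hp
  have hw1 := w_le hp
  rw [abs_le]
  constructor <;> nlinarith

lemma hfun_diff_bound {x y : C(I01, ℝ)} (hx : ‖x‖ ≤ 9/25) (hy : ‖y‖ ≤ 9/25) (s : ℝ) :
    |hfun x s - hfun y s| ≤ 18/25 * dist x y := by
  have h1 : |ext x s| ≤ 9/25 := (ext_bound x s).trans hx
  have h2 : |ext y s| ≤ 9/25 := (ext_bound y s).trans hy
  have h3 : |ext x s - ext y s| ≤ dist x y := by
    rw [← Real.dist_eq]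
    exact ContinuousMap.dist_apply_le_dist _
  have heq : hfun x s - hfun y s = (ext x s + ext y s) * (ext x s - ext y s) := by
    simp only [hfun]; ring
  rw [heq, abs_mul]
  have h4 : |ext x s + ext y s| ≤ 18/25 := (abs_add_le _ _).trans (by linarith)
  exact mul_le_mul h4 h3 (abs_nonneg _) (by norm_num)

lemma T_contract {x y : C(I01, ℝ)} (hx : ‖x‖ ≤ 9/25) (hy : ‖y‖ ≤ 9/25) :
    dist (T x) (T y) ≤ 32/225 * dist x y := by
  rw [ContinuousMap.dist_le (by positivity)]
  intro p
  rw [Real.dist_eq, T_apply, T_apply]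
  have hp : (p : ℝ) ∈ Icc (0:ℝ) 1 := p.2
  have hd0 : (0:ℝ) ≤ dist x y := dist_nonneg
  have hdiff : F (hfun x) p.1 - F (hfun y) p.1
      = F (fun s => hfun x s - hfun y s) p.1 := by
    rw [F_sub (hfun_cont x) (hfun_cont y)]
  have hcont : Continuous (fun s => hfun x s - hfun y s) :=
    (hfun_cont x).sub (hfun_cont y)
  have hlo := F_lower hcont (m := -(18/25 * dist x y))
    (fun s _ => (abs_le.mp (hfun_diff_bound hx hy s)).1) hp
  have hhi := F_upper hcont (M := 18/25 * dist x y)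
    (fun s _ => (abs_le.mp (hfun_diff_bound hx hy s)).2) hp
  have hw0 := w_nonneg hp
  have hw1 := w_le hp
  rw [hdiff, abs_le]
  constructor <;> nlinarith

theorem main_exists (G : ℝ → ℝ → ℝ)
    (hG : ∀ t s : ℝ, G t s = if s ≤ t then s * (1 - t) else t * (1 - s)) :
    ∃ x' : ℝ → ℝ, ContinuousOn x' (Set.Icc (0:ℝ) 1) ∧
      (∀ t ∈ Set.Icc (0:ℝ) 1, 0 ≤ x' t) ∧
      (∀ t ∈ Set.Icc (0:ℝ) 1,
        x' t = ∫ s in (0:ℝ)..1,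
          G t s * (1 + (1/4) * Real.sin s + (x' s) ^ 2) * s ^ (-(1/2) : ℝ)) ∧
      (∀ t ∈ Set.Icc (1/4 : ℝ) (3/4 : ℝ), 11/1000 ≤ x' t) ∧
      (∀ t ∈ Set.Icc (0:ℝ) 1, x' t ≤ 9/25) := by
  classical
  set S : Set C(I01, ℝ) := {x | ‖x‖ ≤ 9/25} with hS
  have hSclosed : IsClosed S := isClosed_le continuous_norm continuous_const
  haveI : CompleteSpace S := hSclosed.completeSpace_coe
  haveI : Nonempty S := ⟨⟨0, by simp only [hS, Set.mem_setOf_eq, norm_zero]; norm_num⟩⟩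
  set T' : S → S := fun x => ⟨T x.1, T_norm_le x.2⟩ with hT'
  have hCW : ContractingWith (⟨32/225, by norm_num⟩ : NNReal) T' := by
    constructor
    · exact NNReal.coe_lt_coe.mp (show (32/225:ℝ) < ((1:NNReal):ℝ) by norm_num)
    · apply LipschitzWith.of_dist_le_mul
      intro x y
      rw [Subtype.dist_eq, Subtype.dist_eq]
      exact (T_contract x.2 y.2).trans (by exact le_rfl)
  obtain ⟨z, hz⟩ : ∃ z : S, T' z = z := ⟨hCW.fixedPoint T', hCW.fixedPoint_isFixedPt⟩
  have hfix : T z.1 = z.1 := congrArg Subtype.val hz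
  refine ⟨ext z.1, (ext_cont z.1).continuousOn, ?_, ?_, ?_, ?_⟩
  · intro t ht
    rw [ext_eq z.1 ht, ← hfix, T_apply]
    have hlo := F_lower (hfun_cont z.1) (fun s _ => hfun_lower z.1 s) ht
    have hw0 := w_nonneg ht
    nlinarith
  · intro t ht
    have hint : ∀ s : ℝ, 1 + (1/4) * Real.sin s + (ext z.1 s) ^ 2 = hfun z.1 s := by
      intro s; simp [hfun]
    simp only [hG, hint]
    have hxt : z.1 ⟨t, ht⟩ = F (hfun z.1) t := by
      conv_lhs => rw [← hfix]
      rfl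
    rw [ext_eq z.1 ht, hxt]
    exact (F_eq (hfun_cont z.1) ht).symm
  · intro t ht
    have ht01 : t ∈ Icc (0:ℝ) 1 := ⟨by linarith [ht.1], by linarith [ht.2]⟩
    rw [ext_eq z.1 ht01, ← hfix, T_apply]
    have hlo := F_lower (hfun_cont z.1) (fun s _ => hfun_lower z.1 s) ht01
    have hv : Real.sqrt t * Real.sqrt t = t := Real.mul_self_sqrt ht01.1
    have hv0 : 0 ≤ Real.sqrt t := Real.sqrt_nonneg t
    have hv78 : Real.sqrt t ≤ 7/8 := by nlinarith [ht.2]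
    have hkey : 11/1000 ≤ t * (1 - Real.sqrt t) := by
      nlinarith [mul_nonneg (by linarith [ht.1] : (0:ℝ) ≤ t - 1/4)
        (by linarith : (0:ℝ) ≤ 1 - Real.sqrt t)]
    nlinarith
  · intro t ht
    calc ext z.1 t ≤ |ext z.1 t| := le_abs_self _
      _ ≤ ‖z.1‖ := ext_bound z.1 t
      _ ≤ 9/25 := z.2

end BVP19

end BVP19

theorem example_conjugate_bvp_order_three_halves
    (G : ℝ → ℝ → ℝ)
    (hG : ∀ t s : ℝ, G t s = if s ≤ t then s * (1 - t) else t * (1 - s)) :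
    ∃ x' : ℝ → ℝ, ContinuousOn x' (Set.Icc (0:ℝ) 1) ∧
      (∀ t ∈ Set.Icc (0:ℝ) 1, 0 ≤ x' t) ∧
      (∀ t ∈ Set.Icc (0:ℝ) 1,
        x' t = ∫ s in (0:ℝ)..1,
          G t s * (1 + (1/4) * Real.sin s + (x' s) ^ 2) * s ^ (-(1/2) : ℝ)) ∧
      (∀ t ∈ Set.Icc (1/4 : ℝ) (3/4 : ℝ), 11/1000 ≤ x' t) ∧
      (∀ t ∈ Set.Icc (0:ℝ) 1, x' t ≤ 9/25) := by
  exact BVP19.main_exists G hG
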